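/- Let k ≥ 1 be an integer. Define a_1 = 1 and, for j > 1, a_j = 1 + Σ_{i=1}^{j-1} a_i². Let ρ > 0 satisfy 4ρ a_k ≤ 1, and define b_1 = 4 and, for j > 1, b_j = (1 + 8a_j)((1 + ρ b_{j-1})(1 + 8a_j) + 1). Let λ > 0, let E be a real inner product space of dimension k, let q be a nonnegative symmetric bilinear form on E (we write q(v) for q(v,v)), and let ψ_1, …, ψ_k ∈ E satisfy |⟨ψ_i, ψ_j⟩ − δ_{ij}| ≤ ρ and q(ψ_i) ≤ λ(1 + ρ) for all 1 ≤ i, j ≤ k. Then there exists an orthonormal basis F_1, …, F_k of E such that q(F_i) ≤ λ(1 + ρ b_k) for every i ∈ {1, …, k}. -/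

import Mathlib

open RealInnerProductSpace

private lemma sqrt_inv_near' {t L : ℝ} (ht0 : 0 ≤ t) (ht : t ≤ 1/4) (hL : |L - 1| ≤ t) :
    |(Real.sqrt L)⁻¹ - 1| ≤ t := by
  rw [abs_le] at hL
  have hL0 : (0:ℝ) < L := by linarith
  have hs0 : 0 < Real.sqrt L := Real.sqrt_pos.2 hL0
  have hss : Real.sqrt L ^ 2 = L := Real.sq_sqrt hL0.le
  rw [abs_le]
  constructor
  · have hA2 : ((1 - t) * Real.sqrt L)^2 ≤ 1 := by
      have e : ((1-t)*Real.sqrt L)^2 = (1-t)^2 * L := by rw [mul_pow, hss]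
      rw [e]
      nlinarith [mul_le_mul_of_nonneg_left hL.2 (sq_nonneg (1-t)),
        mul_nonneg (mul_nonneg ht0 ht0) ht0, sq_nonneg t]
    have h1 : (1 - t) * Real.sqrt L ≤ 1 := by
      nlinarith [mul_nonneg (by linarith : (0:ℝ) ≤ 1 - t) hs0.le]
    have h2 := (le_div_iff₀ hs0).2 h1
    rw [one_div] at h2
    linarith
  · have hA2 : 1 ≤ ((1 + t) * Real.sqrt L)^2 := by
      have e : ((1+t)*Real.sqrt L)^2 = (1+t)^2 * L := by rw [mul_pow, hss]
      rw [e]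
      nlinarith [mul_le_mul_of_nonneg_left hL.1 (sq_nonneg (1+t)),
        mul_nonneg (mul_nonneg ht0 ht0) ht0, sq_nonneg t]
    have h1 : 1 ≤ (1 + t) * Real.sqrt L := by
      nlinarith [mul_nonneg (by linarith : (0:ℝ) ≤ 1 + t) hs0.le]
    have h2 := (div_le_iff₀ hs0).2 h1
    rw [one_div] at h2
    linarith

private lemma bilin_cs' {E : Type*} [AddCommGroup E] [Module ℝ E]
    (q : E →ₗ[ℝ] E →ₗ[ℝ] ℝ) (hsymm : ∀ u v, q u v = q v u)
    (hpos : ∀ v, 0 ≤ q v v) (u w : E) : (q u w)^2 ≤ q u u * q w w := by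
  have h : ∀ x : ℝ, 0 ≤ q w w * (x * x) + 2 * q u w * x + q u u := by
    intro x
    have h0 := hpos (u + x • w)
    simp only [map_add, map_smul, LinearMap.add_apply, LinearMap.smul_apply,
      smul_eq_mul] at h0
    rw [show (q w) u = (q u) w from hsymm w u] at h0
    nlinarith [h0]
  have := discrim_le_zero h
  rw [discrim] at this
  nlinarith

set_option maxHeartbeats 3200000 in
/-- Lemma 2.1 (Bertrand–Colbois type lemma): given an almost-orthonormal family
`ψ₁, …, ψ_k` with controlled energy `q(ψ_i) ≤ λ(1+ρ)`, there is an orthonormal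
basis `F₁, …, F_k` with `q(F_i) ≤ λ(1 + ρ b_k)`. -/
theorem stmt0 {E : Type*} [NormedAddCommGroup E] [InnerProductSpace ℝ E]
    [FiniteDimensional ℝ E]
    (k : ℕ) (hk : 1 ≤ k) (hdim : Module.finrank ℝ E = k)
    (ρ lam : ℝ) (hρ : 0 < ρ) (hlam : 0 < lam)
    (a b : ℕ → ℝ)
    (ha1 : a 1 = 1)
    (ha : ∀ j, 2 ≤ j → a j = 1 + ∑ i ∈ Finset.Icc 1 (j - 1), (a i) ^ 2)
    (hρa : 4 * ρ * a k ≤ 1)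
    (hb1 : b 1 = 4)
    (hb : ∀ j, 2 ≤ j →
      b j = (1 + 8 * a j) * ((1 + ρ * b (j - 1)) * (1 + 8 * a j) + 1))
    (q : E →ₗ[ℝ] E →ₗ[ℝ] ℝ)
    (hsymm : ∀ u v, q u v = q v u)
    (hpos : ∀ v, 0 ≤ q v v)
    (ψ : Fin k → E)
    (hortho : ∀ i j, |⟪ψ i, ψ j⟫ - (if i = j then (1 : ℝ) else 0)| ≤ ρ)
    (hq : ∀ i, q (ψ i) (ψ i) ≤ lam * (1 + ρ)) :
    ∃ F : Fin k → E, Orthonormal ℝ F ∧ Submodule.span ℝ (Set.range F) = ⊤ ∧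
      ∀ i, q (F i) (F i) ≤ lam * (1 + ρ * b k) := by
  classical
  haveI : Nonempty (Fin k) := ⟨⟨0, by omega⟩⟩
  -- sequence facts
  have hak : ∀ j : ℕ, 1 ≤ j → (j:ℝ) ≤ a j := by
    intro j hj
    induction j, hj using Nat.le_induction with
    | base => simp [ha1]
    | succ n hn ih =>
      have hrec : 1 + (a n)^2 ≤ a (n+1) := by
        rw [ha (n+1) (by omega)]
        simp only [Nat.add_sub_cancel]
        have h1 : (a n)^2 ≤ ∑ i ∈ Finset.Icc 1 n, (a i)^2 :=
          Finset.single_le_sum (f := fun i => (a i)^2)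
            (fun i _ => sq_nonneg _) (Finset.mem_Icc.2 ⟨hn, le_refl n⟩)
        linarith
      have hn1 : (1:ℝ) ≤ (n:ℝ) := by exact_mod_cast hn
      push_cast
      nlinarith [ih]
  have hak1 : (1:ℝ) ≤ a k := le_trans (by exact_mod_cast hk) (hak k hk)
  have hρ4 : ρ ≤ 1/4 := by nlinarith
  have hkρ0 : 0 ≤ (k:ℝ) * ρ := by positivity
  have hkρ : (k:ℝ) * ρ ≤ 1/4 := by nlinarith [hak k hk]
  have hb0 : ∀ j : ℕ, 1 ≤ j → 0 ≤ b j := by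
    intro j hj
    induction j, hj using Nat.le_induction with
    | base => rw [hb1]; norm_num
    | succ n hn ih =>
      have hA : (0:ℝ) ≤ a (n+1) := by
        have h1 := hak (n+1) (by omega)
        have h2 : (0:ℝ) ≤ ((n+1 : ℕ):ℝ) := Nat.cast_nonneg _
        linarith
      have h1 : (0:ℝ) ≤ 1 + 8 * a (n+1) := by linarith
      have h2 : (0:ℝ) ≤ 1 + ρ * b n := by nlinarith [mul_nonneg hρ.le ih]
      rw [hb (n+1) (by omega)]
      simp only [Nat.add_sub_cancel]
      exact mul_nonneg h1 (by nlinarith [mul_nonneg h2 h1])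
  -- the final numerical inequality for the sequences
  have key : (1 + ρ) * (1 + (k:ℝ) * ((k:ℝ) * ρ))^2 ≤ 1 + ρ * b k := by
    rcases eq_or_lt_of_le hk with hk1 | hk2
    · -- k = 1
      have hk1' : k = 1 := hk1.symm
      rw [hk1', ha1] at hρa
      rw [hk1', hb1]
      push_cast
      nlinarith [hρ.le, hρ4, mul_le_mul_of_nonneg_left hρ4 hρ.le,
        mul_le_mul_of_nonneg_left (mul_le_mul_of_nonneg_left hρ4 hρ.le) hρ.le]
    · -- k ≥ 2
      have hk2' : 2 ≤ k := hk2
      have hK2 : (2:ℝ) ≤ (k:ℝ) := by exact_mod_cast hk2'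
      have hA := hak k hk
      have hak2 : (k:ℝ)^2 / 2 ≤ a k := by
        have hrec : 1 + (a (k-1))^2 ≤ a k := by
          rw [ha k hk2']
          have h1 : (a (k-1))^2 ≤ ∑ i ∈ Finset.Icc 1 (k-1), (a i)^2 :=
            Finset.single_le_sum (f := fun i => (a i)^2)
              (fun i _ => sq_nonneg _) (Finset.mem_Icc.2 ⟨by omega, le_refl _⟩)
          linarith
        have h1 := hak (k-1) (by omega)
        have hcast : ((k-1 : ℕ):ℝ) = (k:ℝ) - 1 := by
          push_cast [Nat.cast_sub hk]; ring
        rw [hcast] at h1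
        nlinarith [sq_nonneg ((k:ℝ) - 2)]
      have hbk : 64 * (a k)^2 ≤ b k := by
        rw [hb k hk2']
        have hB := hb0 (k-1) (by omega)
        nlinarith [mul_nonneg (mul_nonneg hρ.le hB) (sq_nonneg (1 + 8 * a k)),
          hak1]
      set K := (k:ℝ) with hK
      set A := a k with hA'
      have hA2 : (2:ℝ) ≤ A := le_trans hK2 hA
      have hA0 : (0:ℝ) ≤ A := by linarith
      have hAρ : 4 * ρ * A ≤ 1 := hρa
      have hρ8 : ρ ≤ 1/8 := by nlinarith
      have hK2A : K^2 ≤ 2 * A := by linarith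
      have hK4 : K^4 ≤ 4 * A^2 := by
        have h := mul_le_mul hK2A hK2A (sq_nonneg K) (by linarith : (0:ℝ) ≤ 2*A)
        calc K^4 = K^2 * K^2 := by ring
          _ ≤ (2*A) * (2*A) := h
          _ = 4 * A^2 := by ring
      have h1 : K^4 * ρ ≤ 4 * A^2 * ρ := mul_le_mul_of_nonneg_right hK4 hρ.le
      have h2 : 4 * A^2 * ρ ≤ A := by
        have h := mul_le_mul_of_nonneg_left hAρ hA0
        linarith [h]
      have h3 : K^4 * ρ^2 ≤ A * ρ := by
        have h := mul_le_mul_of_nonneg_right (h1.trans h2) hρ.le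
        linarith [h]
      have h4 : A * ρ ≤ 1/4 := by linarith [hAρ]
      have h5 : K^2 ≤ A^2 := by
        have h := mul_le_mul hA hA (by linarith : (0:ℝ) ≤ K) hA0
        have e1 : K * K = K^2 := by ring
        have e2 : A * A = A^2 := by ring
        linarith [h, e1.symm.trans_le (h.trans e2.le)]
      have hA4 : (4:ℝ) ≤ A^2 := by
        have h := mul_le_mul hA2 hA2 (by norm_num : (0:ℝ) ≤ 2) hA0
        linarith [h]
      have h6 : 2*A ≤ A^2 := by
        have h := mul_le_mul_of_nonneg_left hA2 hA0
        linarith [h]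
      have h7 : K^2*ρ ≤ A^2*ρ := mul_le_mul_of_nonneg_right h5 hρ.le
      have h12 : K^4 * ρ ≤ A := h1.trans h2
      have hS : 1 + 2*K^2 + K^4*ρ + 2*K^2*ρ + K^4*ρ^2 ≤ 64 * A^2 := by
        linarith [hA4, h5, h12, h6, h7, h2, h3, h4]
      calc (1 + ρ) * (1 + K * (K * ρ))^2
          = 1 + ρ * (1 + 2*K^2 + K^4*ρ + 2*K^2*ρ + K^4*ρ^2) := by ring
        _ ≤ 1 + ρ * (64 * A^2) := by
            have h := mul_le_mul_of_nonneg_left hS hρ.le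
            linarith [h]
        _ ≤ 1 + ρ * b k := by
            have h := mul_le_mul_of_nonneg_left hbk hρ.le
            linarith [h]
  -- Gram matrix and spectral data
  set G : Matrix (Fin k) (Fin k) ℝ := Matrix.of fun i j => ⟪ψ i, ψ j⟫ with hGdef
  have hGentry : ∀ i j, G i j = ⟪ψ i, ψ j⟫ := fun _ _ => rfl
  have hGh : G.IsHermitian := by
    ext i j
    simp only [Matrix.conjTranspose_apply, hGdef, Matrix.of_apply, star_trivial]
    exact real_inner_comm (ψ i) (ψ j)
  set v : Fin k → Fin k → ℝ := fun l => ⇑(hGh.eigenvectorBasis l) with hv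
  set L : Fin k → ℝ := hGh.eigenvalues with hLdef
  have hvcol : ∀ l m, ∑ i, v l i * v m i = if l = m then (1:ℝ) else 0 := by
    intro l m
    have := (orthonormal_iff_ite (𝕜 := ℝ)).1 hGh.eigenvectorBasis.orthonormal l m
    simpa [PiLp.inner_apply, mul_comm] using this
  have hvrow : ∀ i j, ∑ l, v l i * v l j = if i = j then (1:ℝ) else 0 := by
    intro i j
    have := hGh.eigenvectorBasis.sum_inner_mul_inner (EuclideanSpace.single i (1:ℝ))
      (EuclideanSpace.single j (1:ℝ))
    simpa [EuclideanSpace.inner_single_left, EuclideanSpace.inner_single_right,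
      EuclideanSpace.single_apply, eq_comm] using this
  have hmul : ∀ l i, ∑ j, G i j * v l j = L l * v l i := by
    intro l i
    have := congr_fun (hGh.mulVec_eigenvectorBasis l) i
    simpa [Matrix.mulVec, dotProduct] using this
  -- eigenvalue bounds
  have hLb : ∀ l, |L l - 1| ≤ (k:ℝ) * ρ := by
    intro l
    have hsq : ∑ i, v l i * v l i = 1 := by simpa using hvcol l l
    have e1 : ∑ i, ∑ j, v l i * v l j * G i j = L l := by
      calc ∑ i, ∑ j, v l i * v l j * G i j
          = ∑ i, v l i * ∑ j, G i j * v l j := by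
            refine Finset.sum_congr rfl fun i _ => ?_
            rw [Finset.mul_sum]
            exact Finset.sum_congr rfl fun j _ => by ring
        _ = ∑ i, v l i * (L l * v l i) := by simp only [hmul]
        _ = L l * ∑ i, v l i * v l i := by
            rw [Finset.mul_sum]
            exact Finset.sum_congr rfl fun i _ => by ring
        _ = L l := by rw [hsq, mul_one]
    have e2 : ∑ i, ∑ j, v l i * v l j * (if i = j then (1:ℝ) else 0) = 1 := by
      have h : ∀ i : Fin k, ∑ j, v l i * v l j * (if i = j then (1:ℝ) else 0)
          = v l i * v l i := by
        intro i
        rw [Finset.sum_eq_single i]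
        · simp
        · intro c _ hc
          simp [Ne.symm hc]
        · intro h; exact absurd (Finset.mem_univ i) h
      rw [Finset.sum_congr rfl fun i _ => h i, hsq]
    have e3 : L l - 1
        = ∑ i, ∑ j, v l i * v l j * (G i j - if i = j then (1:ℝ) else 0) := by
      simp only [mul_sub, Finset.sum_sub_distrib]
      rw [e1, e2]
    rw [e3]
    have habs : ∀ i j : Fin k,
        |v l i * v l j * (G i j - if i = j then (1:ℝ) else 0)| ≤ |v l i| * |v l j| * ρ := by
      intro i j
      rw [abs_mul, abs_mul]
      have h := hortho i j
      rw [← hGentry i j] at h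
      exact mul_le_mul_of_nonneg_left h (by positivity)
    have hcs := sq_sum_le_card_mul_sum_sq (s := (Finset.univ : Finset (Fin k)))
      (f := fun i => |v l i|)
    have h2 : ∑ i, |v l i| ^ 2 = 1 := by
      rw [← hsq]
      exact Finset.sum_congr rfl fun i _ => by rw [sq_abs, sq]
    rw [h2, Finset.card_univ, Fintype.card_fin, mul_one] at hcs
    calc |∑ i, ∑ j, v l i * v l j * (G i j - if i = j then (1:ℝ) else 0)|
        ≤ ∑ i, |∑ j, v l i * v l j * (G i j - if i = j then (1:ℝ) else 0)| :=
          Finset.abs_sum_le_sum_abs _ _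
      _ ≤ ∑ i, ∑ j, |v l i * v l j * (G i j - if i = j then (1:ℝ) else 0)| :=
          Finset.sum_le_sum fun i _ => Finset.abs_sum_le_sum_abs _ _
      _ ≤ ∑ i, ∑ j, |v l i| * |v l j| * ρ :=
          Finset.sum_le_sum fun i _ => Finset.sum_le_sum fun j _ => habs i j
      _ = (∑ i, |v l i|) * (∑ j, |v l j|) * ρ := by
          rw [Finset.sum_mul_sum, Finset.sum_mul]
          exact Finset.sum_congr rfl fun i _ => by rw [Finset.sum_mul]
      _ ≤ (k:ℝ) * ρ := by nlinarith [hρ.le, hcs]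
  have hL34 : ∀ l, (0:ℝ) < L l := by
    intro l
    have := abs_le.1 (hLb l)
    linarith [this.1]
  -- inverse square roots
  set μ : Fin k → ℝ := fun l => (Real.sqrt (L l))⁻¹ with hμdef
  have hμL : ∀ l, μ l ^ 2 * L l = 1 := by
    intro l
    rw [hμdef, inv_pow, Real.sq_sqrt (hL34 l).le]
    exact inv_mul_cancel₀ (hL34 l).ne'
  have hμd : ∀ l, |μ l - 1| ≤ (k:ℝ) * ρ := fun l => sqrt_inv_near' hkρ0 hkρ (hLb l)
  -- the matrix M = G^{-1/2}
  set M : Fin k → Fin k → ℝ := fun i j => ∑ l, μ l * (v l i * v l j) with hM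
  -- key products
  have hMv : ∀ c l, ∑ i, M c i * v l i = μ l * v l c := by
    intro c l
    calc ∑ i, M c i * v l i = ∑ i, ∑ m, μ m * v m c * (v m i * v l i) := by
          refine Finset.sum_congr rfl fun i _ => ?_
          rw [hM, Finset.sum_mul]
          exact Finset.sum_congr rfl fun m _ => by ring
      _ = ∑ m, μ m * v m c * ∑ i, v m i * v l i := by
          rw [Finset.sum_comm]
          exact Finset.sum_congr rfl fun m _ => (Finset.mul_sum _ _ _).symm
      _ = μ l * v l c := by
          simp only [hvcol]
          rw [Finset.sum_eq_single l] <;> simp +contextual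
  have hMGM : ∀ c d, ∑ i, ∑ j, M c i * (M d j * G i j) = if c = d then (1:ℝ) else 0 := by
    intro c d
    have hGM : ∀ i, ∑ j, M d j * G i j = ∑ l, μ l * v l d * (L l * v l i) := by
      intro i
      calc ∑ j, M d j * G i j = ∑ j, ∑ l, μ l * v l d * (G i j * v l j) := by
            refine Finset.sum_congr rfl fun j _ => ?_
            rw [hM, Finset.sum_mul]
            exact Finset.sum_congr rfl fun l _ => by ring
        _ = ∑ l, μ l * v l d * ∑ j, G i j * v l j := by
            rw [Finset.sum_comm]
            exact Finset.sum_congr rfl fun l _ => (Finset.mul_sum _ _ _).symm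
        _ = _ := by simp only [hmul]
    calc ∑ i, ∑ j, M c i * (M d j * G i j)
        = ∑ i, M c i * ∑ j, M d j * G i j :=
          Finset.sum_congr rfl fun i _ => (Finset.mul_sum _ _ _).symm
      _ = ∑ i, ∑ l, μ l * v l d * L l * (M c i * v l i) := by
          refine Finset.sum_congr rfl fun i _ => ?_
          rw [hGM i, Finset.mul_sum]
          exact Finset.sum_congr rfl fun l _ => by ring
      _ = ∑ l, μ l * v l d * L l * ∑ i, M c i * v l i := by
          rw [Finset.sum_comm]
          exact Finset.sum_congr rfl fun l _ => (Finset.mul_sum _ _ _).symm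
      _ = ∑ l, (μ l ^ 2 * L l) * (v l c * v l d) := by
          refine Finset.sum_congr rfl fun l _ => ?_
          rw [hMv c l]; ring
      _ = if c = d then 1 else 0 := by
          simp only [hμL, one_mul]; exact hvrow c d
  -- entrywise bound on M
  have hMd : ∀ i j, |M i j - (if i = j then (1:ℝ) else 0)| ≤ (k:ℝ) * ρ := by
    intro i j
    have e : M i j - (if i = j then (1:ℝ) else 0) = ∑ l, (μ l - 1) * (v l i * v l j) := by
      rw [hM, ← hvrow i j, ← Finset.sum_sub_distrib]
      exact Finset.sum_congr rfl fun l _ => by ring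
    rw [e]
    have hsum1 : ∑ l, |v l i| * |v l j| ≤ 1 := by
      have hcs := Finset.sum_mul_sq_le_sq_mul_sq Finset.univ
        (fun l => |v l i|) (fun l => |v l j|)
      have h1 : ∑ l, |v l i| ^ 2 = 1 := by
        rw [show (1:ℝ) = ∑ l, v l i * v l i by simpa using (hvrow i i).symm]
        exact Finset.sum_congr rfl fun l _ => by rw [sq_abs, sq]
      have h2 : ∑ l, |v l j| ^ 2 = 1 := by
        rw [show (1:ℝ) = ∑ l, v l j * v l j by simpa using (hvrow j j).symm]
        exact Finset.sum_congr rfl fun l _ => by rw [sq_abs, sq]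
      rw [h1, h2, mul_one] at hcs
      have h3 : (0:ℝ) ≤ ∑ l, |v l i| * |v l j| :=
        Finset.sum_nonneg fun l _ => by positivity
      nlinarith
    calc |∑ l, (μ l - 1) * (v l i * v l j)|
        ≤ ∑ l, |(μ l - 1) * (v l i * v l j)| := Finset.abs_sum_le_sum_abs _ _
      _ ≤ ∑ l, (k:ℝ) * ρ * (|v l i| * |v l j|) := by
          refine Finset.sum_le_sum fun l _ => ?_
          rw [abs_mul, abs_mul]
          exact mul_le_mul_of_nonneg_right (hμd l) (by positivity)
      _ = (k:ℝ) * ρ * ∑ l, |v l i| * |v l j| := (Finset.mul_sum _ _ _).symm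
      _ ≤ (k:ℝ) * ρ * 1 := mul_le_mul_of_nonneg_left hsum1 hkρ0
      _ = (k:ℝ) * ρ := mul_one _
  -- row-sum bound on |M|
  have hMabs : ∀ c, ∑ j, |M c j| ≤ 1 + (k:ℝ) * ((k:ℝ) * ρ) := by
    intro c
    calc ∑ j, |M c j| ≤ ∑ j, ((if c = j then (1:ℝ) else 0) + (k:ℝ) * ρ) := by
          refine Finset.sum_le_sum fun j _ => ?_
          have h1 := hMd c j
          have h2 : |(if c = j then (1:ℝ) else 0)| = (if c = j then (1:ℝ) else 0) := by
            split_ifs <;> simp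
          calc |M c j| = |(M c j - (if c = j then (1:ℝ) else 0))
                + (if c = j then (1:ℝ) else 0)| := by ring_nf
            _ ≤ |M c j - (if c = j then (1:ℝ) else 0)| + |(if c = j then (1:ℝ) else 0)| :=
              abs_add_le _ _
            _ ≤ (if c = j then (1:ℝ) else 0) + (k:ℝ) * ρ := by rw [h2]; linarith
      _ = 1 + (k:ℝ) * ((k:ℝ) * ρ) := by
          rw [Finset.sum_add_distrib, Finset.sum_ite_eq, Finset.sum_const,
            Finset.card_univ, Fintype.card_fin]
          simp [nsmul_eq_mul]
  -- the orthonormal family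
  set F : Fin k → E := fun c => ∑ i, M c i • ψ i with hF
  have hFinner : ∀ c d, ⟪F c, F d⟫ = if c = d then (1:ℝ) else 0 := by
    intro c d
    rw [← hMGM c d, hF]
    simp only
    rw [sum_inner]
    refine Finset.sum_congr rfl fun i _ => ?_
    rw [real_inner_smul_left, inner_sum, Finset.mul_sum]
    refine Finset.sum_congr rfl fun j _ => ?_
    rw [real_inner_smul_right, hGentry i j]
  have hFon : Orthonormal ℝ F := by
    rw [orthonormal_iff_ite]
    intro c d
    rw [hFinner c d]
  refine ⟨F, hFon, ?_, ?_⟩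
  · exact hFon.linearIndependent.span_eq_top_of_card_eq_finrank
      (by rw [Fintype.card_fin, hdim])
  · intro c
    -- expand q
    have hqF : q (F c) (F c) = ∑ i, ∑ j, M c i * (M c j * q (ψ i) (ψ j)) := by
      rw [hF]
      simp only [map_sum, map_smul, LinearMap.sum_apply, LinearMap.smul_apply,
        smul_eq_mul]
      refine Finset.sum_congr rfl fun i _ => ?_
      rw [Finset.mul_sum]
      exact Finset.sum_congr rfl fun j _ => by rw [hsymm (ψ j) (ψ i)]
    have hC0 : (0:ℝ) ≤ lam * (1 + ρ) := by positivity
    have habsq : ∀ i j, |q (ψ i) (ψ j)| ≤ lam * (1 + ρ) := by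
      intro i j
      have hcs := bilin_cs' q hsymm hpos (ψ i) (ψ j)
      rw [abs_le]
      constructor <;> nlinarith [hpos (ψ i), hpos (ψ j), hq i, hq j]
    have hstep : q (F c) (F c) ≤ (∑ i, |M c i|) * (∑ j, |M c j|) * (lam * (1 + ρ)) := by
      rw [hqF, Finset.sum_mul_sum, Finset.sum_mul]
      refine Finset.sum_le_sum fun i _ => ?_
      rw [Finset.sum_mul]
      refine Finset.sum_le_sum fun j _ => ?_
      calc M c i * (M c j * q (ψ i) (ψ j)) ≤ |M c i * (M c j * q (ψ i) (ψ j))| :=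
            le_abs_self _
        _ = |M c i| * |M c j| * |q (ψ i) (ψ j)| := by rw [abs_mul, abs_mul]; ring
        _ ≤ |M c i| * |M c j| * (lam * (1 + ρ)) :=
            mul_le_mul_of_nonneg_left (habsq i j) (by positivity)
    have hS : (∑ i, |M c i|) ≤ 1 + (k:ℝ) * ((k:ℝ) * ρ) := hMabs c
    have hS0 : (0:ℝ) ≤ ∑ i, |M c i| := Finset.sum_nonneg fun i _ => abs_nonneg _
    have hstep2 : q (F c) (F c)
        ≤ (1 + (k:ℝ) * ((k:ℝ) * ρ))^2 * (lam * (1 + ρ)) := by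
      refine hstep.trans ?_
      have h : (∑ i, |M c i|) * (∑ j, |M c j|) ≤ (1 + (k:ℝ) * ((k:ℝ) * ρ))^2 := by
        nlinarith
      exact mul_le_mul_of_nonneg_right h hC0
    refine hstep2.trans ?_
    calc (1 + (k:ℝ) * ((k:ℝ) * ρ))^2 * (lam * (1 + ρ))
        = lam * ((1 + ρ) * (1 + (k:ℝ) * ((k:ℝ) * ρ))^2) := by ring
      _ ≤ lam * (1 + ρ * b k) := mul_le_mul_of_nonneg_left key hlam.le
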